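/- There exists a sorted layout that is optimal to the SIPP: if the SIPP instance has any feasible layout, then there is a sorted layout A with W(A) ≤ b whose height H(A) equals the minimum of H over all layouts (of all dimensions) with width at most b. -/

import Mathlib

/-- A `p × q` layout: a matrix whose entries are exactly the integers `1, …, p*q`. -/
def IsLayout (p q : ℕ) (A : Fin p → Fin q → ℕ) : Prop :=
  Function.Injective (fun ij : Fin p × Fin q => A ij.1 ij.2) ∧
  (Set.range fun ij : Fin p × Fin q => A ij.1 ij.2) = Set.Icc 1 (p * q)

/-- Width of a layout with respect to side lengths `l`. -/
def layW (l : ℕ → ℕ) {p q : ℕ} (A : Fin p → Fin q → ℕ) : ℕ :=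
  ∑ j : Fin q, Finset.univ.sup fun i : Fin p => l (A i j)

/-- Height of a layout with respect to side lengths `l`. -/
def layH (l : ℕ → ℕ) {p q : ℕ} (A : Fin p → Fin q → ℕ) : ℕ :=
  ∑ i : Fin p, Finset.univ.sup fun j : Fin q => l (A i j)

/-- A layout is sorted if each row and each column is strictly increasing. -/
def IsSorted {p q : ℕ} (A : Fin p → Fin q → ℕ) : Prop :=
  (∀ i, StrictMono (A i)) ∧ (∀ j, StrictMono fun i => A i j)

section Aux

lemma sup_comp_perm {m : ℕ} (σ : Equiv.Perm (Fin m)) (g : Fin m → ℕ) :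
    (Finset.univ.sup fun j => g (σ j)) = Finset.univ.sup g := by
  refine le_antisymm (Finset.sup_le fun j _ => Finset.le_sup (Finset.mem_univ (σ j)))
    (Finset.sup_le fun j _ => ?_)
  have := Finset.le_sup (f := fun j => g (σ j)) (Finset.mem_univ (σ.symm j))
  simpa using this

lemma layout_entry_ge_one {p q : ℕ} {A : Fin p → Fin q → ℕ} (h : IsLayout p q A)
    (i : Fin p) (j : Fin q) : 1 ≤ A i j := by
  have hmem : A i j ∈ Set.Icc 1 (p * q) := by
    rw [← h.2]; exact ⟨(i, j), rfl⟩
  exact hmem.1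

/-- Order statistics are pointwise monotone. -/
lemma sorted_pointwise_le {p : ℕ} {x y : Fin p → ℕ}
    (hx : Function.Injective x) (hy : Function.Injective y)
    (hxy : ∀ i, x i ≤ y i) (i : Fin p) :
    x (Tuple.sort x i) ≤ y (Tuple.sort y i) := by
  by_contra hcon
  push_neg at hcon
  have hsx : StrictMono (x ∘ Tuple.sort x) :=
    (Tuple.monotone_sort x).strictMono_of_injective (hx.comp (Tuple.sort x).injective)
  have hsy : Monotone (y ∘ Tuple.sort y) := Tuple.monotone_sort y
  set T : Finset (Fin p) := Finset.univ.filter fun t => x t < x (Tuple.sort x i) with hT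
  have h1 : (i : ℕ) + 1 ≤ T.card := by
    rw [← Fin.card_Iic]
    apply Finset.card_le_card_of_injOn (fun k => Tuple.sort y k)
    · intro k hk
      simp only [Finset.mem_coe, Finset.mem_Iic] at hk
      simp only [Finset.mem_coe, hT, Finset.mem_filter, Finset.mem_univ, true_and]
      calc x (Tuple.sort y k) ≤ y (Tuple.sort y k) := hxy _
        _ ≤ y (Tuple.sort y i) := hsy hk
        _ < x (Tuple.sort x i) := hcon
    · exact fun a _ b _ hab => (Tuple.sort y).injective hab
  have h2 : T.card ≤ (i : ℕ) := by
    rw [← Fin.card_Iio]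
    apply Finset.card_le_card_of_injOn (fun t => (Tuple.sort x).symm t)
    · intro t ht
      simp only [Finset.mem_coe, hT, Finset.mem_filter, Finset.mem_univ, true_and] at ht
      simp only [Finset.mem_coe, Finset.mem_Iio]
      have hlt : (x ∘ Tuple.sort x) ((Tuple.sort x).symm t) < (x ∘ Tuple.sort x) i := by
        simpa using ht
      exact hsx.lt_iff_lt.mp hlt
    · exact fun a _ b _ hab => (Tuple.sort x).symm.injective hab
  omega

lemma sum_le_sum_of_counts {q : ℕ} {w w' : Fin q → ℕ}
    (hc : ∀ j : Fin q, (j : ℕ) + 1 ≤ (Finset.univ.filter fun c => w' j ≤ w c).card) :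
    ∑ j, w' j ≤ ∑ j, w j := by
  classical
  set e : Equiv.Perm (Fin q) := Fin.revPerm.trans (Tuple.sort w) with he
  have hed : ∀ c : Fin q, e c = Tuple.sort w (Fin.rev c) := fun c => rfl
  have hmon : Monotone (w ∘ Tuple.sort w) := Tuple.monotone_sort w
  have hvw : ∀ j, w' j ≤ w (e j) := by
    intro j
    by_contra hcontra
    push_neg at hcontra
    have hsub : (Finset.univ.filter fun c => w' j ≤ w (e c)) ⊆ Finset.Iio j := by
      intro c hcmem
      simp only [Finset.mem_filter, Finset.mem_univ, true_and] at hcmem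
      simp only [Finset.mem_Iio]
      by_contra hc2
      push_neg at hc2
      have hrev : Fin.rev c ≤ Fin.rev j := Fin.rev_le_rev.mpr hc2
      have hle : w (e c) ≤ w (e j) := by
        rw [hed, hed]; exact hmon hrev
      omega
    have hcard : (Finset.univ.filter fun c => w' j ≤ w (e c)).card
        = (Finset.univ.filter fun c => w' j ≤ w c).card := by
      apply Finset.card_equiv e
      intro c
      simp only [Finset.mem_filter, Finset.mem_univ, true_and]
    have hc1 := hc j
    rw [← hcard] at hc1
    have hc2 := Finset.card_le_card hsub
    rw [Fin.card_Iio] at hc2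
    omega
  calc ∑ j, w' j ≤ ∑ j, w (e j) := Finset.sum_le_sum fun j _ => hvw j
    _ = ∑ j, w j := Equiv.sum_comp e w

lemma rowSort_isLayout {p q : ℕ} {C : Fin p → Fin q → ℕ} (h : IsLayout p q C) :
    IsLayout p q (fun i j => C i (Tuple.sort (C i) j)) := by
  constructor
  · rintro ⟨i, j⟩ ⟨i', j'⟩ hij
    simp only at hij
    have h2 := h.1 (a₁ := (i, Tuple.sort (C i) j)) (a₂ := (i', Tuple.sort (C i') j')) hij
    have hi : i = i' := congrArg Prod.fst h2
    subst hi
    have hj := congrArg Prod.snd h2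
    have := (Tuple.sort (C i)).injective hj
    subst this
    rfl
  · rw [← h.2]
    ext x
    simp only [Set.mem_range, Prod.exists]
    constructor
    · rintro ⟨i, j, rfl⟩; exact ⟨i, Tuple.sort (C i) j, rfl⟩
    · rintro ⟨i, j, rfl⟩; exact ⟨i, (Tuple.sort (C i)).symm j, by simp⟩

lemma rowSort_layH {p q : ℕ} (l : ℕ → ℕ) (C : Fin p → Fin q → ℕ) :
    layH l (fun i j => C i (Tuple.sort (C i) j)) = layH l C := by
  unfold layH
  exact Finset.sum_congr rfl fun i _ => sup_comp_perm (Tuple.sort (C i)) (fun j => l (C i j))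

lemma rowSort_layW_le {p q : ℕ} {l : ℕ → ℕ}
    (lantit : ∀ a c : ℕ, 1 ≤ a → a ≤ c → l c ≤ l a)
    {C : Fin p → Fin q → ℕ} (hpos : ∀ i j, 1 ≤ C i j) :
    layW l (fun i j => C i (Tuple.sort (C i) j)) ≤ layW l C := by
  classical
  have hDpos : ∀ (i : Fin p) (j : Fin q), 1 ≤ C i (Tuple.sort (C i) j) := fun i j => hpos _ _
  have hDmono : ∀ i : Fin p, Monotone (fun j => C i (Tuple.sort (C i) j)) :=
    fun i => Tuple.monotone_sort (C i)
  unfold layW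
  apply sum_le_sum_of_counts
  intro j
  rcases isEmpty_or_nonempty (Fin p) with hp | hp
  · have hz : (Finset.univ.sup fun i : Fin p => l (C i (Tuple.sort (C i) j))) = 0 := by
      simp [Finset.univ_eq_empty]
    rw [hz]
    have hfil : (Finset.univ.filter fun c : Fin q =>
        0 ≤ Finset.univ.sup fun i : Fin p => l (C i c)) = Finset.univ := by
      simp
    rw [hfil, Finset.card_univ, Fintype.card_fin]
    exact j.isLt
  · obtain ⟨i₀, -, hi₀⟩ := Finset.exists_mem_eq_sup Finset.univ Finset.univ_nonempty
      (fun i : Fin p => l (C i (Tuple.sort (C i) j)))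
    rw [← Fin.card_Iic]
    apply Finset.card_le_card_of_injOn (fun c => Tuple.sort (C i₀) c)
    · intro c hcmem
      simp only [Finset.mem_coe, Finset.mem_Iic] at hcmem
      simp only [Finset.mem_coe, Finset.mem_filter, Finset.mem_univ, true_and]
      rw [hi₀]
      calc l (C i₀ (Tuple.sort (C i₀) j))
          ≤ l (C i₀ (Tuple.sort (C i₀) c)) :=
            lantit _ _ (hDpos i₀ c) (hDmono i₀ hcmem)
        _ ≤ Finset.univ.sup fun i => l (C i (Tuple.sort (C i₀) c)) :=
            Finset.le_sup (f := fun i => l (C i (Tuple.sort (C i₀) c))) (Finset.mem_univ i₀)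
    · exact fun a _ b _ hab => (Tuple.sort (C i₀)).injective hab

lemma transpose_isLayout {p q : ℕ} {A : Fin p → Fin q → ℕ} (h : IsLayout p q A) :
    IsLayout q p (fun j i => A i j) := by
  constructor
  · rintro ⟨j, i⟩ ⟨j', i'⟩ hji
    simp only at hji
    have h2 := h.1 (a₁ := (i, j)) (a₂ := (i', j')) hji
    have hi : i = i' := congrArg Prod.fst h2
    have hj : j = j' := congrArg Prod.snd h2
    subst hi; subst hj; rfl
  · rw [Nat.mul_comm q p, ← h.2]
    ext x
    constructor
    · rintro ⟨⟨j, i⟩, rfl⟩; exact ⟨(i, j), rfl⟩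
    · rintro ⟨⟨i, j⟩, rfl⟩; exact ⟨(j, i), rfl⟩

end Aux

/-- If the SIPP instance has any feasible layout, then there is a sorted
feasible layout whose height equals the minimum height over all feasible layouts. -/
theorem sorted_layout_optimal (n b : ℕ) (l : ℕ → ℕ)
    (hmono : ∀ a c, 1 ≤ a → a ≤ c → c ≤ n → l c ≤ l a)
    (hpos : ∀ k, 1 ≤ k → k ≤ n → 0 < l k)
    (hzero : ∀ k, n < k → l k = 0)
    (hfeas : ∃ (p q : ℕ) (A : Fin p → Fin q → ℕ),
      n ≤ p * q ∧ IsLayout p q A ∧ layW l A ≤ b) :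
    ∃ (p q : ℕ) (A : Fin p → Fin q → ℕ),
      n ≤ p * q ∧ IsLayout p q A ∧ IsSorted A ∧ layW l A ≤ b ∧
      ∀ (p' q' : ℕ) (B : Fin p' → Fin q' → ℕ),
        n ≤ p' * q' → IsLayout p' q' B → layW l B ≤ b → layH l A ≤ layH l B := by
  classical
  have lantit : ∀ a c : ℕ, 1 ≤ a → a ≤ c → l c ≤ l a := by
    intro a c ha hac
    rcases le_or_gt c n with h | h
    · exact hmono a c ha hac h
    · rw [hzero c h]; exact Nat.zero_le _
  have hex : ∃ h, ∃ (p q : ℕ) (A : Fin p → Fin q → ℕ),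
      n ≤ p * q ∧ IsLayout p q A ∧ layW l A ≤ b ∧ layH l A = h := by
    obtain ⟨p, q, A, h1, h2, h3⟩ := hfeas
    exact ⟨layH l A, p, q, A, h1, h2, h3, rfl⟩
  obtain ⟨p, q, B, hn, hLB, hWB, hHB⟩ := Nat.find_spec hex
  have hmin : ∀ (p' q' : ℕ) (B' : Fin p' → Fin q' → ℕ),
      n ≤ p' * q' → IsLayout p' q' B' → layW l B' ≤ b → Nat.find hex ≤ layH l B' :=
    fun p' q' B' h1 h2 h3 => Nat.find_le ⟨p', q', B', h1, h2, h3, rfl⟩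
  let A1 : Fin p → Fin q → ℕ := fun i j => B i (Tuple.sort (B i) j)
  let E : Fin q → Fin p → ℕ := fun j i => A1 i j
  let D : Fin q → Fin p → ℕ := fun j i => E j (Tuple.sort (E j) i)
  let A2 : Fin p → Fin q → ℕ := fun i j => D j i
  have hLA1 : IsLayout p q A1 := rowSort_isLayout hLB
  have hLE : IsLayout q p E := transpose_isLayout hLA1
  have hLD : IsLayout q p D := rowSort_isLayout hLE
  have hLA2 : IsLayout p q A2 := transpose_isLayout hLD
  have hposB : ∀ i j, 1 ≤ B i j := layout_entry_ge_one hLB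
  have hposE : ∀ j i, 1 ≤ E j i := layout_entry_ge_one hLE
  have hW1 : layW l A1 ≤ layW l B := rowSort_layW_le lantit hposB
  have hH1 : layH l A1 = layH l B := rowSort_layH l B
  have hWD : layW l D ≤ layW l E := rowSort_layW_le lantit hposE
  have hHD : layH l D = layH l E := rowSort_layH l E
  have hWE : layW l E = layH l A1 := rfl
  have hHE : layH l E = layW l A1 := rfl
  have hWA2 : layW l A2 = layH l D := rfl
  have hHA2 : layH l A2 = layW l D := rfl
  have hmonoRowsA1 : ∀ i, Monotone (A1 i) := fun i => Tuple.monotone_sort (B i)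
  have hcolinj : ∀ j : Fin q, Function.Injective fun i => A1 i j := by
    intro j i i' hii
    have h2 := hLA1.1 (a₁ := (i, j)) (a₂ := (i', j)) hii
    exact congrArg Prod.fst h2
  have hcolA2mono : ∀ j : Fin q, Monotone fun i => A2 i j :=
    fun j => Tuple.monotone_sort (E j)
  have hrowA2mono : ∀ i : Fin p, Monotone fun j => A2 i j := by
    intro i a c hac
    exact sorted_pointwise_le (hcolinj a) (hcolinj c) (fun k => hmonoRowsA1 k hac) i
  have hsorted : IsSorted A2 := by
    constructor
    · intro i
      apply (hrowA2mono i).strictMono_of_injective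
      intro j j' hjj
      have h2 := hLA2.1 (a₁ := (i, j)) (a₂ := (i, j')) hjj
      exact congrArg Prod.snd h2
    · intro j
      apply (hcolA2mono j).strictMono_of_injective
      intro i i' hii
      have h2 := hLA2.1 (a₁ := (i, j)) (a₂ := (i', j)) hii
      exact congrArg Prod.fst h2
  refine ⟨p, q, A2, hn, hLA2, hsorted, ?_, ?_⟩
  · calc layW l A2 = layH l D := hWA2
      _ = layW l A1 := hHD.trans hHE
      _ ≤ layW l B := hW1
      _ ≤ b := hWB
  · intro p' q' B' h1 h2 h3
    calc layH l A2 = layW l D := hHA2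
      _ ≤ layH l A1 := hWE ▸ hWD
      _ = layH l B := hH1
      _ = Nat.find hex := hHB
      _ ≤ layH l B' := hmin p' q' B' h1 h2 h3
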